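/- Let ι be an isometry of the principal alcove C_l that maps weights to weights and is of the form ι(x) = σ(x+ρ) - ρ + t with σ ∈ W and t a weight (a translated-Weyl composed with a translation). Then for every σ' ∈ W_l, the conjugate ι^{-1} σ' ι lies in W_l. -/

import Mathlib

open scoped RealInnerProductSpace Pointwise

/-- The reflection in the hyperplane orthogonal to `α`. -/
noncomputable def rootReflection {E : Type*} [NormedAddCommGroup E]
    [InnerProductSpace ℝ E] (α : E) (x : E) : E :=
  x - (2 * ⟪x, α⟫ / ⟪α, α⟫) • α

theorem Equiv.Perm.apply_inv_self {α : Type*} (f : Equiv.Perm α) (x : α) : f (f⁻¹ x) = x :=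
  f.apply_symm_apply x

theorem Equiv.Perm.inv_apply_self {α : Type*} (f : Equiv.Perm α) (x : α) : f⁻¹ (f x) = x :=
  f.symm_apply_apply x

namespace AlcoveAux

variable {E : Type*} [NormedAddCommGroup E] [InnerProductSpace ℝ E]

lemma rr_zero (x : E) : rootReflection (0 : E) x = x := by
  simp [rootReflection]

lemma rr_add (α x y : E) :
    rootReflection α (x + y) = rootReflection α x + rootReflection α y := by
  simp only [rootReflection, inner_add_left]
  rw [show 2 * (⟪x, α⟫ + ⟪y, α⟫) / ⟪α, α⟫
      = 2 * ⟪x, α⟫ / ⟪α, α⟫ + 2 * ⟪y, α⟫ / ⟪α, α⟫ by ring]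
  rw [add_smul]
  abel

lemma rr_smul (α : E) (c : ℝ) (x : E) :
    rootReflection α (c • x) = c • rootReflection α x := by
  simp only [rootReflection, real_inner_smul_left, smul_sub]
  rw [show 2 * (c * ⟪x, α⟫) / ⟪α, α⟫ = c * (2 * ⟪x, α⟫ / ⟪α, α⟫) by ring, mul_smul]

lemma rr_inner (α x y : E) :
    ⟪rootReflection α x, rootReflection α y⟫ = ⟪x, y⟫ := by
  rcases eq_or_ne α 0 with h | h
  · simp [h, rr_zero]
  · have hα : ⟪α, α⟫ ≠ 0 := by
      simpa using (inner_self_ne_zero (𝕜 := ℝ)).2 h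
    simp only [rootReflection, inner_sub_left, inner_sub_right, real_inner_smul_left,
      real_inner_smul_right]
    field_simp
    rw [real_inner_comm α y]
    ring

lemma rr_invol (α : E) : Function.Involutive (rootReflection α) := by
  intro x
  rcases eq_or_ne α 0 with h | h
  · simp [h, rr_zero]
  · have hα : ⟪α, α⟫ ≠ 0 := by
      simpa using (inner_self_ne_zero (𝕜 := ℝ)).2 h
    simp only [rootReflection, inner_sub_left, real_inner_smul_left]
    rw [show 2 * (⟪x, α⟫ - 2 * ⟪x, α⟫ / ⟪α, α⟫ * ⟪α, α⟫) / ⟪α, α⟫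
        = -(2 * ⟪x, α⟫ / ⟪α, α⟫) by field_simp; ring]
    simp only [sub_eq_add_neg, neg_smul, neg_neg]
    abel

/-- reflection as a permutation -/
noncomputable def rrPerm (α : E) : Equiv.Perm E := (rr_invol α).toPerm

@[simp] lemma rrPerm_apply (α x : E) : rrPerm α x = rootReflection α x := rfl

lemma rr_self (α : E) (hα : α ≠ 0) : rootReflection α α = -α := by
  have hα' : ⟪α, α⟫ ≠ 0 := by
      simpa using (inner_self_ne_zero (𝕜 := ℝ)).2 hα
  simp only [rootReflection]
  rw [show 2 * ⟪α, α⟫ / ⟪α, α⟫ = 2 by field_simp]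
  rw [two_smul]; abel

end AlcoveAux

namespace AlcoveAux

variable {E : Type*} [NormedAddCommGroup E] [InnerProductSpace ℝ E]

/-- The properties we need of elements of the Weyl group `W`. -/
def Good (Φ : Finset E) (w : Equiv.Perm E) : Prop :=
  (∀ x y : E, w (x + y) = w x + w y) ∧ (∀ (c : ℝ) (x : E), w (c • x) = c • w x) ∧
  (∀ x y : E, ⟪w x, w y⟫ = ⟪x, y⟫) ∧ (∀ β ∈ Φ, w β ∈ Φ) ∧ (∀ β ∈ Φ, w⁻¹ β ∈ Φ)

lemma good_one (Φ : Finset E) : Good Φ (1 : Equiv.Perm E) := by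
  refine ⟨fun x y => rfl, fun c x => rfl, fun x y => rfl, fun β hβ => hβ, fun β hβ => hβ⟩

lemma good_mul (Φ : Finset E) {w₁ w₂ : Equiv.Perm E} (h₁ : Good Φ w₁) (h₂ : Good Φ w₂) :
    Good Φ (w₁ * w₂) := by
  obtain ⟨a1, s1, i1, f1, g1⟩ := h₁
  obtain ⟨a2, s2, i2, f2, g2⟩ := h₂
  refine ⟨fun x y => ?_, fun c x => ?_, fun x y => ?_, fun β hβ => ?_, fun β hβ => ?_⟩
  · simp only [Equiv.Perm.mul_apply, a2, a1]
  · simp only [Equiv.Perm.mul_apply, s2, s1]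
  · simp only [Equiv.Perm.mul_apply, i2, i1]
  · exact f1 _ (f2 _ hβ)
  · have : (w₁ * w₂)⁻¹ = w₂⁻¹ * w₁⁻¹ := by group
    rw [this]
    exact g2 _ (g1 _ hβ)

lemma good_inv (Φ : Finset E) {w : Equiv.Perm E} (h : Good Φ w) : Good Φ w⁻¹ := by
  obtain ⟨a, s, i, f, g⟩ := h
  refine ⟨fun x y => ?_, fun c x => ?_, fun x y => ?_, fun β hβ => g β hβ,
    fun β hβ => by simpa using f β hβ⟩
  · apply w.injective
    rw [a]
    simp
  · apply w.injective
    rw [s]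
    simp
  · rw [← i (w⁻¹ x) (w⁻¹ y)]
    simp

lemma good_of_mem_W {Φ : Finset E} (h0 : (0 : E) ∉ Φ)
    (hrefl : ∀ α ∈ Φ, ∀ β ∈ Φ, rootReflection α β ∈ Φ)
    {w : Equiv.Perm E}
    (hw : w ∈ Subgroup.closure {g : Equiv.Perm E | ∃ α ∈ Φ, ∀ x, g x = rootReflection α x}) :
    Good Φ w := by
  refine Subgroup.closure_induction (p := fun g _ => Good Φ g) ?_ (good_one Φ)
    (fun x y _ _ hx hy => good_mul Φ hx hy) (fun x _ hx => good_inv Φ hx) hw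
  rintro g ⟨α, hα, hg⟩
  have hginv : g⁻¹ = g := by
    have h2 : g * g = 1 := by
      ext x
      simp only [Equiv.Perm.mul_apply, hg, Equiv.Perm.one_apply]
      exact rr_invol α x
    calc g⁻¹ = g⁻¹ * (g * g) := by rw [h2, mul_one]
    _ = g := by group
  refine ⟨fun x y => ?_, fun c x => ?_, fun x y => ?_, fun β hβ => ?_, fun β hβ => ?_⟩
  · rw [hg, hg, hg, rr_add]
  · rw [hg, hg, rr_smul]
  · rw [hg, hg, rr_inner]
  · rw [hg]; exact hrefl α hα β hβ
  · rw [hginv, hg]; exact hrefl α hα β hβ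

lemma good_zero {Φ : Finset E} {w : Equiv.Perm E} (h : Good Φ w) : w 0 = 0 := by
  have := h.2.1 0 0
  simpa using this

lemma good_neg {Φ : Finset E} {w : Equiv.Perm E} (h : Good Φ w) (x : E) : w (-x) = - w x := by
  have := h.2.1 (-1) x
  simpa using this

lemma good_zsmul {Φ : Finset E} {w : Equiv.Perm E} (h : Good Φ w) (n : ℤ) (x : E) :
    w (n • x) = n • w x := by
  have := h.2.1 (n : ℝ) x
  rw [← Int.cast_smul_eq_zsmul ℝ n x, ← Int.cast_smul_eq_zsmul ℝ n (w x)]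
  exact this

lemma good_maps_M {Φ : Finset E} {l' : ℕ} {D : ℕ} {Λr coΛr M : AddSubgroup E}
    (hΛr : Λr = AddSubgroup.closure (↑Φ : Set E))
    (hcoΛr : coΛr = AddSubgroup.closure {x : E | ∃ β ∈ Φ, x = (2 / ⟪β, β⟫) • β})
    (hM : M = if D ∣ l' then (l' : ℤ) • coΛr else (l' : ℤ) • Λr)
    {w : Equiv.Perm E} (h : Good Φ w) : ∀ m ∈ M, w m ∈ M := by
  have hΛr' : ∀ s ∈ Λr, w s ∈ Λr := by
    intro s hs
    rw [hΛr] at hs ⊢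
    refine AddSubgroup.closure_induction (fun x hx => AddSubgroup.subset_closure ?_)
      (by rw [good_zero h]; exact AddSubgroup.zero_mem _)
      (fun x y _ _ hx hy => by rw [h.1]; exact AddSubgroup.add_mem _ hx hy)
      (fun x _ hx => by rw [good_neg h]; exact AddSubgroup.neg_mem _ hx) hs
    exact h.2.2.2.1 x hx
  have hcoΛr' : ∀ s ∈ coΛr, w s ∈ coΛr := by
    intro s hs
    rw [hcoΛr] at hs ⊢
    refine AddSubgroup.closure_induction (fun x hx => AddSubgroup.subset_closure ?_)
      (by rw [good_zero h]; exact AddSubgroup.zero_mem _)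
      (fun x y _ _ hx hy => by rw [h.1]; exact AddSubgroup.add_mem _ hx hy)
      (fun x _ hx => by rw [good_neg h]; exact AddSubgroup.neg_mem _ hx) hs
    obtain ⟨β, hβ, rfl⟩ := hx
    refine ⟨w β, h.2.2.2.1 β hβ, ?_⟩
    rw [h.2.1, h.2.2.1]
  intro m hm
  by_cases hDl : D ∣ l' <;> simp only [hDl, if_true, if_false] at hM <;> subst hM <;>
    rw [AddSubgroup.mem_smul_pointwise_iff_exists] at hm ⊢
  · obtain ⟨s, hs, rfl⟩ := hm
    exact ⟨w s, hcoΛr' s hs, (good_zsmul h _ _).symm⟩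
  · obtain ⟨s, hs, rfl⟩ := hm
    exact ⟨w s, hΛr' s hs, (good_zsmul h _ _).symm⟩

end AlcoveAux

namespace AlcoveAux

variable {E : Type*} [NormedAddCommGroup E] [InnerProductSpace ℝ E]

lemma rips {x : E} (hx : x ≠ 0) : (0:ℝ) < ⟪x, x⟫ :=
  lt_of_le_of_ne real_inner_self_nonneg (Ne.symm ((inner_self_ne_zero (𝕜 := ℝ)).2 hx))

lemma strict_cs {a β : E} (ha : a ≠ 0) (hβ : β ≠ 0) (hind : ∀ c : ℝ, β ≠ c • a) :
    ⟪β, a⟫ * ⟪β, a⟫ < ⟪a, a⟫ * ⟪β, β⟫ := by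
  have hA : (0:ℝ) < ⟪a, a⟫ := rips ha
  set c : ℝ := ⟪β, a⟫ / ⟪a, a⟫ with hc
  have hv : β - c • a ≠ 0 := by
    intro h
    exact hind c (by rw [← sub_eq_zero]; exact h)
  have hvv : (0:ℝ) < ⟪β - c • a, β - c • a⟫ := rips hv
  have hexp : ⟪β - c • a, β - c • a⟫
      = ⟪β, β⟫ - c * ⟪a, β⟫ - (c * ⟪β, a⟫ - c * (c * ⟪a, a⟫)) := by
    simp only [inner_sub_left, inner_sub_right, real_inner_smul_left, real_inner_smul_right]
  rw [hexp] at hvv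
  have hsym : ⟪a, β⟫ = ⟪β, a⟫ := real_inner_comm β a ▸ rfl
  rw [hsym] at hvv
  have hc' : c * ⟪a, a⟫ = ⟪β, a⟫ := by
    rw [hc, div_mul_cancel₀ _ (ne_of_gt hA)]
  nlinarith [hvv, hc', hA]

end AlcoveAux

namespace AlcoveAux

variable {E : Type*} [NormedAddCommGroup E] [InnerProductSpace ℝ E]

lemma neg_mem_Phi {Φ : Finset E} (h0 : (0 : E) ∉ Φ)
    (hrefl : ∀ α ∈ Φ, ∀ β ∈ Φ, rootReflection α β ∈ Φ) {γ : E} (hγ : γ ∈ Φ) : -γ ∈ Φ := by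
  have h := hrefl γ hγ γ hγ
  rwa [rr_self γ (fun h' => h0 (h' ▸ hγ))] at h

lemma repr_eq {Δ : Finset E} (b : Module.Basis Δ ℝ E) (hb : ∀ i : Δ, b i = (i : E))
    (c : Δ → ℝ) (x : E) (hx : x = ∑ a, c a • (a : E)) (i : Δ) : b.repr x i = c i := by
  have h1 : b.equivFun.symm c = x := by
    rw [Module.Basis.equivFun_symm_apply, hx]
    exact Finset.sum_congr rfl fun j _ => by rw [hb]
  have h2 : b.equivFun x = c := by rw [← h1, LinearEquiv.apply_symm_apply]
  have h3 : ⇑(b.repr x) = c := by rw [← b.equivFun_apply, h2]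
  exact congrFun h3 i

lemma int_coords {Φ Δ : Finset E} (h0 : (0 : E) ∉ Φ)
    (hrefl : ∀ α ∈ Φ, ∀ β ∈ Φ, rootReflection α β ∈ Φ)
    (hint : ∀ α ∈ Φ, ∀ β ∈ Φ, ∃ n : ℤ, 2 * ⟪β, α⟫ / ⟪α, α⟫ = (n : ℝ))
    (hred : ∀ α ∈ Φ, ∀ c : ℝ, c • α ∈ Φ → c = 1 ∨ c = -1)
    (hΔ : ↑Δ ⊆ (Φ : Set E))
    (hdecomp : ∀ β ∈ Φ, ∃ c : Δ → ℝ, (β = ∑ a, c a • (a : E)) ∧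
      ((∀ a, 0 ≤ c a) ∨ (∀ a, c a ≤ 0)))
    (b : Module.Basis Δ ℝ E) (hb : ∀ i : Δ, b i = (i : E)) :
    ∀ β ∈ Φ, ∀ i : Δ, ∃ n : ℤ, b.repr β i = (n : ℝ) := by
  classical
  have hdich : ∀ β ∈ Φ, (∀ i, 0 ≤ b.repr β i) ∨ (∀ i, b.repr β i ≤ 0) := by
    intro β hβ
    obtain ⟨c, hc, hsign⟩ := hdecomp β hβ
    rcases hsign with h | h
    · exact Or.inl fun i => (repr_eq b hb c β hc i) ▸ h i
    · exact Or.inr fun i => (repr_eq b hb c β hc i) ▸ h i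
  set ht : E → ℝ := fun x => ∑ i : Δ, b.repr x i with hht
  have key : ∀ k : ℕ, ∀ β ∈ Φ, (∀ i, 0 ≤ b.repr β i) →
      (Φ.filter (fun γ => ht γ < ht β)).card = k → ∀ i : Δ, ∃ n : ℤ, b.repr β i = (n : ℝ) := by
    intro k
    induction k using Nat.strong_induction_on with
    | _ k IH =>
    intro β hβ hpos hcard
    by_cases hβΔ : β ∈ Δ
    · intro i
      have hrw : b.repr β i = b.repr (b ⟨β, hβΔ⟩) i := by rw [hb]
      rw [hrw, b.repr_self, Finsupp.single_apply]
      split_ifs with h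
      · exact ⟨1, by simp⟩
      · exact ⟨0, by simp⟩
    · have hβ0 : β ≠ 0 := fun h => h0 (h ▸ hβ)
      have hex : ∃ a : Δ, 0 < ⟪β, (a : E)⟫ := by
        by_contra hcon
        push_neg at hcon
        have hsum : ⟪β, β⟫ = ∑ i : Δ, b.repr β i * ⟪b i, β⟫ := by
          calc ⟪β, β⟫ = ⟪∑ i : Δ, b.repr β i • b i, β⟫ := by rw [b.sum_repr]
          _ = ∑ i : Δ, ⟪b.repr β i • b i, β⟫ := by rw [sum_inner]
          _ = ∑ i : Δ, b.repr β i * ⟪b i, β⟫ :=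
            Finset.sum_congr rfl fun i _ => real_inner_smul_left _ _ _
        have hle : ⟪β, β⟫ ≤ 0 := by
          rw [hsum]
          apply Finset.sum_nonpos
          intro i _
          apply mul_nonpos_of_nonneg_of_nonpos (hpos i)
          rw [hb, real_inner_comm]
          exact hcon i
        exact absurd hle (not_le.2 (rips hβ0))
      obtain ⟨a, hia⟩ := hex
      have haΦ : (a : E) ∈ Φ := hΔ a.2
      have ha0 : (a : E) ≠ 0 := fun h => h0 (h ▸ haΦ)
      have hindep : ∀ c : ℝ, β ≠ c • (a : E) := by
        intro c h
        rcases hred (a : E) haΦ c (h ▸ hβ) with h1 | h1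
        · rw [h1, one_smul] at h; exact hβΔ (h ▸ a.2)
        · rw [h1] at h
          have hc : β = ∑ i : Δ, (if i = a then (-1 : ℝ) else 0) • (i : E) := by
            rw [Finset.sum_eq_single a (fun i _ hi => by rw [if_neg hi, zero_smul])
              (fun hh => absurd (Finset.mem_univ a) hh), if_pos rfl, h]
          have hval := repr_eq b hb _ β hc a
          rw [if_pos rfl] at hval
          linarith [hpos a]
      obtain ⟨np, hnp⟩ := hint (a : E) haΦ β hβ
      obtain ⟨nq, hnq⟩ := hint β hβ (a : E) haΦ
      have haa : (0:ℝ) < ⟪(a:E), (a:E)⟫ := rips ha0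
      have hbb : (0:ℝ) < ⟪β, β⟫ := rips hβ0
      have hnp1 : 1 ≤ np := by
        have h1 : (0:ℝ) < (np : ℝ) := by
          rw [← hnp]; positivity
        have h2 : (0:ℤ) < np := by exact_mod_cast h1
        omega
      have hnq1 : 1 ≤ nq := by
        have h0' : (0:ℝ) < ⟪(a:E), β⟫ := by rwa [real_inner_comm]
        have h1 : (0:ℝ) < (nq : ℝ) := by
          rw [← hnq]; positivity
        have h2 : (0:ℤ) < nq := by exact_mod_cast h1
        omega
      have hprod : np * nq < 4 := by
        have hcs := strict_cs ha0 hβ0 hindep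
        have h1 : (np : ℝ) * nq < 4 := by
          rw [← hnp, ← hnq, div_mul_div_comm, div_lt_iff₀ (by positivity)]
          have h2 : ⟪(a:E), β⟫ = ⟪β, (a:E)⟫ := real_inner_comm β (a:E) ▸ rfl
          rw [h2]
          nlinarith [hcs]
        exact_mod_cast h1
      have hγΦ : β - (a : E) ∈ Φ := by
        have hcase : np = 1 ∨ nq = 1 := by
          by_contra hcon2
          push_neg at hcon2
          have h2 : 2 ≤ np := by omega
          have h3 : 2 ≤ nq := by omega
          nlinarith
        rcases hcase with h | h
        · have h1 := hrefl (a : E) haΦ β hβ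
          simp only [rootReflection] at h1
          rwa [hnp, h, Int.cast_one, one_smul] at h1
        · have h1 := hrefl β hβ (a : E) haΦ
          simp only [rootReflection] at h1
          rw [hnq, h, Int.cast_one, one_smul] at h1
          have h2 := neg_mem_Phi h0 hrefl h1
          rwa [neg_sub] at h2
      have hrepγ : ∀ i, b.repr (β - (a : E)) i
          = b.repr β i - (if i = a then (1:ℝ) else 0) := by
        intro i
        rw [map_sub, Finsupp.sub_apply]
        congr 1
        have hba : ((a : Δ) : E) = b a := (hb a).symm
        rw [hba, b.repr_self, Finsupp.single_apply]
        simp [eq_comm]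
      rcases hdich _ hγΦ with hposγ | hnegγ
      · have hhtγ : ht (β - (a : E)) = ht β - 1 := by
          simp only [hht]
          rw [Finset.sum_congr rfl fun i _ => hrepγ i, Finset.sum_sub_distrib,
            Finset.sum_ite_eq' Finset.univ a (fun _ => (1:ℝ))]
          simp
        have hsub : Φ.filter (fun γ => ht γ < ht (β - (a:E)))
            ⊆ Φ.filter (fun γ => ht γ < ht β) := by
          intro γ' hγ'
          rw [Finset.mem_filter] at hγ' ⊢
          rw [hhtγ] at hγ'
          exact ⟨hγ'.1, by linarith [hγ'.2]⟩
        have hmem : β - (a:E) ∈ Φ.filter (fun γ => ht γ < ht β) :=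
          Finset.mem_filter.2 ⟨hγΦ, by rw [hhtγ]; linarith⟩
        have hnot : β - (a:E) ∉ Φ.filter (fun γ => ht γ < ht (β-(a:E))) := by
          rw [Finset.mem_filter]
          rintro ⟨-, hlt⟩
          exact lt_irrefl _ hlt
        have hlt : (Φ.filter (fun γ => ht γ < ht (β-(a:E)))).card < k := by
          rw [← hcard]
          exact Finset.card_lt_card ((Finset.ssubset_iff_of_subset hsub).2 ⟨_, hmem, hnot⟩)
        intro i
        obtain ⟨n, hn⟩ := IH _ hlt (β - (a:E)) hγΦ hposγ rfl i
        rcases eq_or_ne i a with h | h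
        · refine ⟨n + 1, ?_⟩
          rw [hrepγ i, if_pos h] at hn
          push_cast
          linarith
        · exact ⟨n, by rw [hrepγ i, if_neg h, sub_zero] at hn; exact hn⟩
      · exfalso
        have hzero : ∀ i, i ≠ a → b.repr β i = 0 := by
          intro i hi
          have h1 := hnegγ i
          rw [hrepγ i, if_neg hi, sub_zero] at h1
          exact le_antisymm h1 (hpos i)
        have hβa : β = b.repr β a • (a : E) := by
          conv_lhs => rw [← b.sum_repr β]
          rw [Finset.sum_eq_single a]
          · rw [hb]
          · intro i _ hi
            rw [hzero i hi, zero_smul]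
          · intro h
            exact absurd (Finset.mem_univ a) h
        rcases hred (a:E) haΦ (b.repr β a) (hβa ▸ hβ) with h | h
        · rw [h, one_smul] at hβa
          exact hβΔ (hβa ▸ a.2)
        · linarith [hpos a, h ▸ (le_refl (b.repr β a))]
  intro β hβ i
  rcases hdich β hβ with h | h
  · exact key _ β hβ h rfl i
  · have hnβ : -β ∈ Φ := neg_mem_Phi h0 hrefl hβ
    have hpos : ∀ i, 0 ≤ b.repr (-β) i := by
      intro j
      rw [map_neg, Finsupp.neg_apply]
      linarith [h j]
    obtain ⟨n, hn⟩ := key _ (-β) hnβ hpos rfl i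
    refine ⟨-n, ?_⟩
    rw [map_neg, Finsupp.neg_apply] at hn
    push_cast
    linarith

end AlcoveAux

namespace AlcoveAux

variable {E : Type*} [NormedAddCommGroup E] [InnerProductSpace ℝ E]

lemma orth_all {Δ : Finset E} (b : Module.Basis Δ ℝ E) (hb : ∀ i : Δ, b i = (i : E))
    {y : E} (hy : ∀ i : Δ, ⟪y, (i : E)⟫ = 0) : y = 0 := by
  have h : ⟪y, y⟫ = 0 := by
    calc ⟪y, y⟫ = ⟪y, ∑ i : Δ, b.repr y i • b i⟫ := by rw [b.sum_repr]
    _ = ∑ i : Δ, b.repr y i * ⟪y, b i⟫ := by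
        rw [inner_sum]
        exact Finset.sum_congr rfl fun i _ => real_inner_smul_right _ _ _
    _ = 0 := Finset.sum_eq_zero fun i _ => by rw [hb, hy i, mul_zero]
  by_contra h0
  exact absurd h (ne_of_gt (rips h0))

lemma inner_basis_sum {Δ : Finset E} (b : Module.Basis Δ ℝ E) (hb : ∀ i : Δ, b i = (i : E))
    (w x : E) : ⟪w, x⟫ = ∑ i : Δ, b.repr x i * ⟪w, (i : E)⟫ := by
  calc ⟪w, x⟫ = ⟪w, ∑ i : Δ, b.repr x i • b i⟫ := by rw [b.sum_repr]
  _ = ∑ i : Δ, b.repr x i * ⟪w, b i⟫ := by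
      rw [inner_sum]
      exact Finset.sum_congr rfl fun i _ => real_inner_smul_right _ _ _
  _ = ∑ i : Δ, b.repr x i * ⟪w, (i : E)⟫ :=
      Finset.sum_congr rfl fun i _ => by rw [hb]

end AlcoveAux

namespace AlcoveAux

variable {E : Type*} [NormedAddCommGroup E] [InnerProductSpace ℝ E]

lemma inner_basis_sum' {ι : Type*} [Fintype ι] (b : Module.Basis ι ℝ E) (w x : E) :
    ⟪w, x⟫ = ∑ i, b.repr x i * ⟪w, b i⟫ := by
  calc ⟪w, x⟫ = ⟪w, ∑ i, b.repr x i • b i⟫ := by rw [b.sum_repr]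
  _ = ∑ i, b.repr x i * ⟪w, b i⟫ := by
      rw [inner_sum]
      exact Finset.sum_congr rfl fun i _ => real_inner_smul_right _ _ _

lemma add_self_zero {x : E} (h : x + x = 0) : x = 0 := by
  have h2 : (2:ℝ) • x = 0 := by rw [two_smul]; exact h
  rcases smul_eq_zero.1 h2 with h | h
  · norm_num at h
  · exact h

set_option maxHeartbeats 2000000 in
lemma lemma_C {Φ Δ : Finset E} (h0 : (0 : E) ∉ Φ)
    (hrefl : ∀ α ∈ Φ, ∀ β ∈ Φ, rootReflection α β ∈ Φ)
    (hint : ∀ α ∈ Φ, ∀ β ∈ Φ, ∃ n : ℤ, 2 * ⟪β, α⟫ / ⟪α, α⟫ = (n : ℝ))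
    (hred : ∀ α ∈ Φ, ∀ c : ℝ, c • α ∈ Φ → c = 1 ∨ c = -1)
    (hΔ : ↑Δ ⊆ (Φ : Set E))
    (hdecomp : ∀ β ∈ Φ, ∃ c : Δ → ℝ, (β = ∑ a, c a • (a : E)) ∧
      ((∀ a, 0 ≤ c a) ∨ (∀ a, c a ≤ 0)))
    (b : Module.Basis Δ ℝ E) (hb : ∀ i : Δ, b i = (i : E))
    (D : ℕ) (hD : D = 1 ∨ Nat.Prime D)
    (hlen : ∀ β ∈ Φ, ⟪β, β⟫ = 2 ∨ ⟪β, β⟫ = 2 * D)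
    (l' : ℕ) (hl' : 0 < l')
    (Λr coΛr M : AddSubgroup E)
    (hΛr : Λr = AddSubgroup.closure (↑Φ : Set E))
    (hcoΛr : coΛr = AddSubgroup.closure {x : E | ∃ β ∈ Φ, x = (2 / ⟪β, β⟫) • β})
    (hM : M = if D ∣ l' then (l' : ℤ) • coΛr else (l' : ℤ) • Λr)
    (θ₀ : E) (hθ₀Φ : θ₀ ∈ Φ)
    (σ : Equiv.Perm E) (hσg : Good Φ σ) (t : E)
    (htΛ : ∀ β ∈ Φ, ∃ k : ℤ, ⟪t, (2 / ⟪β, β⟫) • β⟫ = (k : ℝ))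
    (hA : Set.BijOn (fun y => σ y + t)
      {y : E | (∀ a ∈ Δ, 0 ≤ ⟪y, a⟫) ∧ ⟪y, θ₀⟫ ≤ l'}
      {y : E | (∀ a ∈ Δ, 0 ≤ ⟪y, a⟫) ∧ ⟪y, θ₀⟫ ≤ l'}) :
    ∀ α ∈ Φ, (2 * ⟪t, α⟫ / ⟪α, α⟫) • α ∈ M := by
  classical
  set Cl' : Set E := {y : E | (∀ a ∈ Δ, 0 ≤ ⟪y, a⟫) ∧ ⟪y, θ₀⟫ ≤ l'} with hCl'
  set A : E → E := fun y => σ y + t with hAdef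
  set c : Δ → ℝ := fun i => b.repr θ₀ i with hcdef
  have hFD : FiniteDimensional ℝ E := Module.Finite.of_basis b
  -- the Riesz vectors dual to the basis Δ
  set sharp : Δ → E := fun i =>
    (InnerProductSpace.toDual ℝ E).symm (b.coord i).toContinuousLinearMap with hsharpdef
  have hsharp : ∀ (i : Δ) (x : E), ⟪sharp i, x⟫ = b.repr x i := by
    intro i x
    simp only [hsharpdef]
    rw [InnerProductSpace.toDual_symm_apply]
    rfl
  have hθ₀sum : ∀ y : E, ⟪y, θ₀⟫ = ∑ i : Δ, c i * ⟪y, (i : E)⟫ :=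
    fun y => inner_basis_sum b hb y θ₀
  have hmemCl' : ∀ y : E, y ∈ Cl' ↔ ((∀ i : Δ, 0 ≤ ⟪y, (i : E)⟫) ∧ ⟪y, θ₀⟫ ≤ l') := by
    intro y
    constructor
    · rintro ⟨h1, h2⟩
      exact ⟨fun i => h1 (i : E) i.2, h2⟩
    · rintro ⟨h1, h2⟩
      exact ⟨fun a ha => h1 ⟨a, ha⟩, h2⟩
  have h0Cl' : (0 : E) ∈ Cl' := by
    rw [hmemCl']
    constructor
    · intro i
      simp
    · simp only [inner_zero_left]
      positivity
  have htCl' : t ∈ Cl' := by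
    have h := hA.mapsTo h0Cl'
    simpa [hAdef, good_zero hσg] using h
  -- extremality of t, in midpoint form
  have hext : ∀ u v, u ∈ Cl' → v ∈ Cl' → u + v = t + t → u = v := by
    intro u v hu hv huv
    obtain ⟨u', hu', hAu'⟩ := hA.surjOn hu
    obtain ⟨v', hv', hAv'⟩ := hA.surjOn hv
    have hsum : σ (u' + v') = 0 := by
      have h1 : (σ u' + t) + (σ v' + t) = t + t := by
        rw [show σ u' + t = u from hAu', show σ v' + t = v from hAv']
        exact huv
      have h2 : (σ u' + σ v') + (t + t) = 0 + (t + t) := by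
        rw [zero_add]
        calc (σ u' + σ v') + (t + t) = (σ u' + t) + (σ v' + t) := by abel
        _ = t + t := h1
      have h3 := add_right_cancel h2
      rw [hσg.1, h3]
    have huv0 : u' + v' = 0 := by
      have := good_zero hσg
      apply σ.injective
      rw [hsum, this]
    -- now u' + v' = 0 with both in Cl'; conclude u' = v' = 0
    have hu'0 : u' = 0 := by
      rw [hmemCl'] at hu' hv'
      apply orth_all b hb
      intro i
      have h1 := hu'.1 i
      have h2 := hv'.1 i
      have h3 : ⟪u', (i : E)⟫ + ⟪v', (i : E)⟫ = 0 := by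
        rw [← inner_add_left, huv0, inner_zero_left]
      have h4 : ⟪u', (i:E)⟫ = 0 := by linarith
      -- needs u' ⊥ everything : we show each coordinate is 0
      exact h4
    have hv'0 : v' = 0 := by
      rw [hu'0, zero_add] at huv0
      exact huv0
    rw [← hAu', ← hAv', hu'0, hv'0]
  -- a generic perturbation contradiction
  have hpert : ∀ w : E, w ≠ 0 → ∀ ε : ℝ, 0 < ε →
      t + ε • w ∈ Cl' → t - ε • w ∈ Cl' → False := by
    intro w hw0 ε hε h1 h2
    have h3 : (t + ε • w) + (t - ε • w) = t + t := by abel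
    have h4 := hext _ _ h1 h2 h3
    have h5 : ε • w + ε • w = 0 := by
      have h6 : t + (ε • w + ε • w) = t + 0 := by
        rw [add_zero]
        calc t + (ε • w + ε • w) = (t + ε • w) + (ε • w) := by abel
        _ = (t - ε • w) + (ε • w) := by rw [h4]
        _ = t := by abel
      exact add_left_cancel h6
    rcases smul_eq_zero.1 (add_self_zero h5) with h | h
    · exact absurd h (ne_of_gt hε)
    · exact hw0 h
  -- dichotomy for the coefficients of θ₀
  have hcd : (∀ i, 0 ≤ c i) ∨ (∀ i, c i ≤ 0) := by
    obtain ⟨c', hc', hs⟩ := hdecomp θ₀ hθ₀Φ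
    have hceq : ∀ i, c i = c' i := fun i => repr_eq b hb c' θ₀ hc' i
    rcases hs with h | h
    · exact Or.inl (fun i => (hceq i) ▸ h i)
    · exact Or.inr (fun i => (hceq i) ▸ h i)
  have hdone0 : t = 0 → ∀ α ∈ Φ, (2 * ⟪t, α⟫ / ⟪α, α⟫) • α ∈ M := by
    intro ht0 α hα
    rw [ht0]
    have : (2 * ⟪(0:E), α⟫ / ⟪α, α⟫) • α = 0 := by
      rw [inner_zero_left]
      norm_num
    rw [this]
    exact M.zero_mem
  by_cases hneg : ∀ i, c i ≤ 0
  · -- cone case : t = 0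
    apply hdone0 ?_
    have h2t : t + t ∈ Cl' := by
      rw [hmemCl'] at htCl' ⊢
      refine ⟨fun i => ?_, ?_⟩
      · rw [inner_add_left]
        linarith [htCl'.1 i]
      · rw [hθ₀sum]
        have hsum : ∑ i : Δ, c i * ⟪t + t, (i : E)⟫ ≤ 0 := by
          apply Finset.sum_nonpos
          intro i _
          apply mul_nonpos_of_nonpos_of_nonneg (hneg i)
          rw [inner_add_left]
          linarith [htCl'.1 i]
        calc ∑ i : Δ, c i * ⟪t + t, (i : E)⟫ ≤ 0 := hsum
        _ ≤ (l' : ℝ) := by positivity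
    have h1 := hext 0 (t + t) h0Cl' h2t (by abel)
    exact add_self_zero h1.symm
  have hcpos : ∀ i, 0 ≤ c i := hcd.resolve_right hneg
  have htle : ⟪t, θ₀⟫ ≤ l' := ((hmemCl' t).1 htCl').2
  have htc : ∀ i : Δ, 0 ≤ ⟪t, (i : E)⟫ := ((hmemCl' t).1 htCl').1
  have hwθ : ∀ i : Δ, ⟪sharp i, θ₀⟫ = c i := fun i => hsharp i θ₀
  have hwj : ∀ i j : Δ, ⟪sharp i, (j : E)⟫ = if j = i then 1 else 0 := by
    intro i j
    rw [hsharp]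
    have : (j : E) = b j := (hb j).symm
    rw [this, b.repr_self, Finsupp.single_apply]
  by_cases hteq : ⟪t, θ₀⟫ = (l' : ℝ)
  · -- vertex case
    have hsum0 : ∑ i : Δ, c i * ⟪t, (i : E)⟫ = l' := by rw [← hθ₀sum]; exact hteq
    have hex : ∃ i₀ : Δ, 0 < c i₀ * ⟪t, (i₀ : E)⟫ := by
      by_contra h
      push_neg at h
      have : ∑ i : Δ, c i * ⟪t, (i : E)⟫ ≤ 0 := Finset.sum_nonpos fun i _ => h i
      rw [hsum0] at this
      have : (0:ℝ) < l' := by exact_mod_cast hl'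
      linarith
    obtain ⟨i₀, hprod⟩ := hex
    have hci₀ : 0 < c i₀ := by
      rcases lt_or_eq_of_le (hcpos i₀) with h | h
      · exact h
      · rw [← h, zero_mul] at hprod; exact absurd hprod (lt_irrefl 0)
    have hti₀ : 0 < ⟪t, (i₀ : E)⟫ := by
      by_contra h
      push_neg at h
      nlinarith
    -- all other coordinates of t vanish
    have ht_j : ∀ j : Δ, j ≠ i₀ → ⟪t, (j : E)⟫ = 0 := by
      intro j hj
      by_contra hj0
      have hjpos : 0 < ⟪t, (j : E)⟫ := lt_of_le_of_ne (htc j) (Ne.symm hj0)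
      set w : E := sharp j - (c j / c i₀) • sharp i₀ with hwdef
      have hwk : ∀ k : Δ, ⟪w, (k : E)⟫
          = (if k = j then 1 else 0) - (c j / c i₀) * (if k = i₀ then 1 else 0) := by
        intro k
        rw [hwdef, inner_sub_left, real_inner_smul_left, hwj j k, hwj i₀ k]
      have hwθ₀ : ⟪w, θ₀⟫ = 0 := by
        rw [hwdef, inner_sub_left, real_inner_smul_left, hwθ j, hwθ i₀]
        field_simp
        ring
      have hw0 : w ≠ 0 := by
        intro h
        have h2 := hwk j
        rw [h, if_pos rfl, if_neg hj] at h2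
        simp at h2
      set ε : ℝ := min ⟪t, (j:E)⟫ (⟪t, (i₀:E)⟫ * c i₀ / (|c j| + 1)) with hεdef
      have hε : 0 < ε := by
        apply lt_min hjpos
        apply div_pos (by positivity) (by positivity)
      have hεi₀ : ε * (|c j| / c i₀) ≤ ⟪t, (i₀:E)⟫ := by
        have h1 : ε ≤ ⟪t, (i₀:E)⟫ * c i₀ / (|c j| + 1) := min_le_right _ _
        have h3 : (0:ℝ) < |c j| + 1 := by positivity
        rw [le_div_iff₀ h3] at h1
        have key : ε * |c j| ≤ ⟪t, (i₀:E)⟫ * c i₀ := by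
          nlinarith [abs_nonneg (c j), hε.le]
        calc ε * (|c j| / c i₀) = (ε * |c j|) / c i₀ := by ring
        _ ≤ (⟪t, (i₀:E)⟫ * c i₀) / c i₀ := by
            exact (div_le_div_iff_of_pos_right hci₀).2 key
        _ = ⟪t, (i₀:E)⟫ := by field_simp
      have hmemp : ∀ s : ℝ, |s| ≤ 1 → t + (s * ε) • w ∈ Cl' := by
        intro s hs
        have hsε : |s * ε| ≤ ε := by
          rw [abs_mul, abs_of_pos hε]
          nlinarith
        rw [hmemCl']
        constructor
        · intro k
          rw [inner_add_left, real_inner_smul_left, hwk k]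
          rcases eq_or_ne k j with h | h
          · rw [if_pos h, if_neg (h ▸ hj), mul_zero, sub_zero, mul_one, h]
            have h3 : -ε ≤ s * ε := (abs_le.1 hsε).1
            have h4 : ε ≤ ⟪t, (j : E)⟫ := min_le_left _ _
            linarith
          · rw [if_neg h]
            rcases eq_or_ne k i₀ with h2 | h2
            · rw [if_pos h2, mul_one, zero_sub, h2]
              have h3 : s * ε * -(c j / c i₀) ≥ -(ε * (|c j| / c i₀)) := by
                have habs : |s * ε * -(c j / c i₀)| ≤ ε * (|c j| / c i₀) := by
                  rw [abs_mul, abs_neg, abs_div, abs_of_pos hci₀]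
                  have := abs_nonneg (c j)
                  have h5 : (0:ℝ) ≤ |c j| / c i₀ := by positivity
                  nlinarith
                linarith [(abs_le.1 habs).1]
              linarith
            · rw [if_neg h2, mul_zero, sub_zero, mul_zero, add_zero]
              exact htc k
        · rw [inner_add_left, real_inner_smul_left, hwθ₀, mul_zero, add_zero]
          exact htle
      have h1 := hmemp 1 (by norm_num)
      have h2 := hmemp (-1) (by norm_num)
      rw [one_mul] at h1
      have h2' : t - ε • w ∈ Cl' := by
        rw [show t - ε • w = t + (-1 * ε) • w by rw [neg_one_mul, neg_smul]; abel]
        exact h2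
      exact hpert w hw0 ε hε h1 h2'
    have hti₀l : c i₀ * ⟪t, (i₀ : E)⟫ = l' := by
      rw [← hsum0, Finset.sum_eq_single i₀]
      · intro j _ hj
        rw [ht_j j hj, mul_zero]
      · intro h
        exact absurd (Finset.mem_univ i₀) h
    -- tangent cones at 0 and at t
    set P₀ : E → Prop := fun w => ∀ i : Δ, 0 ≤ ⟪w, (i : E)⟫ with hP₀def
    set P₁ : E → Prop := fun w =>
      (∀ i : Δ, i ≠ i₀ → 0 ≤ ⟪w, (i : E)⟫) ∧ ⟪w, θ₀⟫ ≤ 0 with hP₁def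
    have hT₀ : ∀ w : E, P₀ w ↔ ∃ ε : ℝ, 0 < ε ∧ ε • w ∈ Cl' := by
      intro w
      constructor
      · intro hw
        by_cases hwθ₀ : ⟪w, θ₀⟫ ≤ 0
        · refine ⟨1, one_pos, ?_⟩
          rw [hmemCl']
          constructor
          · intro i
            rw [real_inner_smul_left, one_mul]
            exact hw i
          · rw [real_inner_smul_left, one_mul]
            calc ⟪w, θ₀⟫ ≤ 0 := hwθ₀
            _ ≤ (l' : ℝ) := by positivity
        · push_neg at hwθ₀
          refine ⟨(l' : ℝ) / ⟪w, θ₀⟫, by positivity, ?_⟩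
          rw [hmemCl']
          constructor
          · intro i
            rw [real_inner_smul_left]
            have := hw i
            positivity
          · rw [real_inner_smul_left, div_mul_cancel₀]
            exact ne_of_gt hwθ₀
      · rintro ⟨ε, hε, hmem⟩
        intro i
        rw [hmemCl'] at hmem
        have h1 := hmem.1 i
        rw [real_inner_smul_left] at h1
        nlinarith
    have hT₁ : ∀ w : E, P₁ w ↔ ∃ ε : ℝ, 0 < ε ∧ t + ε • w ∈ Cl' := by
      intro w
      constructor
      · rintro ⟨hw1, hw2⟩
        set ε : ℝ := min 1 (⟪t, (i₀:E)⟫ / (|⟪w, (i₀:E)⟫| + 1)) with hεdef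
        have hε : 0 < ε := lt_min one_pos (by positivity)
        refine ⟨ε, hε, ?_⟩
        rw [hmemCl']
        constructor
        · intro i
          rw [inner_add_left, real_inner_smul_left]
          rcases eq_or_ne i i₀ with h | h
          · rw [h]
            have h1 : ε ≤ ⟪t, (i₀:E)⟫ / (|⟪w, (i₀:E)⟫| + 1) := min_le_right _ _
            have h3 : (0:ℝ) < |⟪w, (i₀:E)⟫| + 1 := by positivity
            rw [le_div_iff₀ h3] at h1
            have h4 : ε * ⟪w, (i₀:E)⟫ ≥ -(ε * |⟪w, (i₀:E)⟫|) := by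
              have := neg_abs_le ⟪w, (i₀:E)⟫
              nlinarith
            nlinarith [abs_nonneg ⟪w, (i₀:E)⟫, hε.le]
          · rw [ht_j i h]
            have := hw1 i h
            positivity
        · rw [inner_add_left, real_inner_smul_left, hteq]
          nlinarith
      · rintro ⟨ε, hε, hmem⟩
        rw [hmemCl'] at hmem
        constructor
        · intro i hi
          have h1 := hmem.1 i
          rw [inner_add_left, real_inner_smul_left, ht_j i hi, zero_add] at h1
          nlinarith
        · have h2 := hmem.2
          rw [inner_add_left, real_inner_smul_left, hteq] at h2
          nlinarith
    have hσinner : ∀ x y : E, ⟪σ x, σ y⟫ = ⟪x, y⟫ := hσg.2.2.1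
    have hσsmul : ∀ (r : ℝ) (x : E), σ (r • x) = r • σ x := hσg.2.1
    have hσK : ∀ w : E, P₀ w ↔ P₁ (σ w) := by
      intro w
      rw [hT₀, hT₁]
      constructor
      · rintro ⟨ε, hε, hmem⟩
        refine ⟨ε, hε, ?_⟩
        have h1 := hA.mapsTo hmem
        have h2 : A (ε • w) = t + ε • σ w := by
          simp only [hAdef, hσsmul]
          abel
        rw [← h2]
        exact h1
      · rintro ⟨ε, hε, hmem⟩
        refine ⟨ε, hε, ?_⟩
        have h2 : A (ε • w) = t + ε • σ w := by
          simp only [hAdef, hσsmul]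
          abel
        obtain ⟨z, hz, hAz⟩ := hA.surjOn (h2 ▸ hmem : A (ε • w) ∈ Cl')
        have h3 : z = ε • w := by
          apply σ.injective
          have h4 : σ z + t = σ (ε • w) + t := by
            rw [show σ z + t = A z from rfl, show σ (ε • w) + t = A (ε • w) from rfl, hAz]
          exact add_right_cancel h4
        rw [← h3]
        exact hz
    -- the modified basis
    set f : Δ → E := fun i => if i = i₀ then -θ₀ else (i : E) with hfdef
    have hfi₀ : f i₀ = -θ₀ := by rw [hfdef]; simp
    have hfne : ∀ i : Δ, i ≠ i₀ → f i = (i : E) := by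
      intro i hi
      rw [hfdef]
      simp [hi]
    set L : E →ₗ[ℝ] E := b.constr ℝ f with hLdef
    have hLb : ∀ i : Δ, L (b i) = f i := fun i => b.constr_basis ℝ f i
    have hθ₀sum' : θ₀ = ∑ j : Δ, c j • b j := by
      conv_lhs => rw [← b.sum_repr θ₀]
    have hbmem : ∀ i : Δ, b i ∈ Submodule.span ℝ (Set.range f) := by
      intro i
      by_cases hi : i = i₀
      · rw [hi]
        have hθm : θ₀ ∈ Submodule.span ℝ (Set.range f) := by
          have h1 : -θ₀ ∈ Submodule.span ℝ (Set.range f) :=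
            Submodule.subset_span ⟨i₀, hfi₀⟩
          have h2 := Submodule.neg_mem _ h1
          rwa [neg_neg] at h2
        have hsum : θ₀ = c i₀ • b i₀ + ∑ j ∈ Finset.univ.erase i₀, c j • b j := by
          rw [hθ₀sum', ← Finset.add_sum_erase Finset.univ (fun j => c j • b j)
            (Finset.mem_univ i₀)]
        have hbi : b i₀ = (c i₀)⁻¹ • (θ₀ - ∑ j ∈ Finset.univ.erase i₀, c j • b j) := by
          rw [hsum, add_sub_cancel_right, smul_smul, inv_mul_cancel₀ (ne_of_gt hci₀), one_smul]
        rw [hbi]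
        apply Submodule.smul_mem
        apply Submodule.sub_mem _ hθm
        apply Submodule.sum_mem
        intro j hj
        apply Submodule.smul_mem
        have hjne : j ≠ i₀ := (Finset.mem_erase.1 hj).1
        have hbj : b j = f j := by rw [hfne j hjne, hb]
        rw [hbj]
        exact Submodule.subset_span ⟨j, rfl⟩
      · have hbi : b i = f i := by rw [hfne i hi, hb]
        rw [hbi]
        exact Submodule.subset_span ⟨i, rfl⟩
    have hLsurj : Function.Surjective L := by
      rw [← LinearMap.range_eq_top, eq_top_iff]
      intro x _
      have hle : Submodule.span ℝ (Set.range f) ≤ LinearMap.range L := by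
        apply Submodule.span_le.2
        rintro y ⟨i, rfl⟩
        exact ⟨b i, hLb i⟩
      apply hle
      have hx : (∑ i : Δ, b.repr x i • b i) ∈ Submodule.span ℝ (Set.range f) :=
        Submodule.sum_mem _ fun i _ => Submodule.smul_mem _ _ (hbmem i)
      rwa [b.sum_repr] at hx
    have hLinj : Function.Injective L := LinearMap.injective_iff_surjective.2 hLsurj
    set b' : Module.Basis Δ ℝ E := b.map (LinearEquiv.ofBijective L ⟨hLinj, hLsurj⟩) with hb'def
    have hb' : ∀ i : Δ, b' i = f i := by
      intro i
      rw [hb'def, Module.Basis.map_apply]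
      exact hLb i
    set sharp' : Δ → E := fun i =>
      (InnerProductSpace.toDual ℝ E).symm (b'.coord i).toContinuousLinearMap with hsharp'def
    have hsharp' : ∀ (i : Δ) (x : E), ⟪sharp' i, x⟫ = b'.repr x i := by
      intro i x
      simp only [hsharp'def]
      rw [InnerProductSpace.toDual_symm_apply]
      rfl
    have hrb' : ∀ i k : Δ, b'.repr (b' k) i = if k = i then 1 else 0 := by
      intro i k
      rw [b'.repr_self, Finsupp.single_apply]
    have hfΦ : ∀ i : Δ, f i ∈ Φ := by
      intro i
      by_cases hi : i = i₀
      · rw [hi, hfi₀]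
        exact neg_mem_Phi h0 hrefl hθ₀Φ
      · rw [hfne i hi]
        exact hΔ i.2
    have hC₀ : ∀ x : E, (∀ i, 0 ≤ b.repr x i) ↔ (∀ w, P₀ w → 0 ≤ ⟪w, x⟫) := by
      intro x
      constructor
      · intro h w hw
        rw [inner_basis_sum b hb w x]
        exact Finset.sum_nonneg fun i _ => mul_nonneg (h i) (hw i)
      · intro h i
        have hP : P₀ (sharp i) := by
          intro j
          rw [hwj i j]
          split_ifs <;> norm_num
        have := h (sharp i) hP
        rwa [hsharp] at this
    have hθ₀b' : θ₀ = -(b' i₀) := by rw [hb', hfi₀, neg_neg]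
    have hC₁ : ∀ x : E, (∀ i, 0 ≤ b'.repr x i) ↔ (∀ w, P₁ w → 0 ≤ ⟪w, x⟫) := by
      intro x
      constructor
      · intro h w hw
        rw [inner_basis_sum' b' w x]
        apply Finset.sum_nonneg
        intro i _
        apply mul_nonneg (h i)
        rcases eq_or_ne i i₀ with hi | hi
        · rw [hi, hb', hfi₀, inner_neg_right]
          linarith [hw.2]
        · rw [hb', hfne i hi]
          exact hw.1 i hi
      · intro h i
        have hP : P₁ (sharp' i) := by
          constructor
          · intro j hj
            have hj' : (j : E) = b' j := by rw [hb', hfne j hj]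
            rw [hj', hsharp', hrb']
            split_ifs <;> norm_num
          · rw [hθ₀b', inner_neg_right, hsharp', hrb']
            split_ifs
            · norm_num
            · norm_num
        have := h (sharp' i) hP
        rwa [hsharp'] at this
    have hKey : ∀ x : E, (∀ i, 0 ≤ b.repr x i) ↔ (∀ i, 0 ≤ b'.repr (σ x) i) := by
      intro x
      rw [hC₀, hC₁]
      constructor
      · intro h w hw
        have h1 : P₀ (σ⁻¹ w) := by
          apply (hσK (σ⁻¹ w)).2
          rwa [Equiv.Perm.apply_inv_self]
        have h2 := h (σ⁻¹ w) h1
        have h3 : ⟪w, σ x⟫ = ⟪σ⁻¹ w, x⟫ := by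
          conv_lhs => rw [← Equiv.Perm.apply_inv_self σ w]
          exact hσinner _ _
        rw [h3]
        exact h2
      · intro h w hw
        have h1 : P₁ (σ w) := (hσK w).1 hw
        have h2 := h (σ w) h1
        calc (0:ℝ) ≤ ⟪σ w, σ x⟫ := h2
        _ = ⟪w, x⟫ := hσinner w x
    -- each σ (b j) equals some f i
    have hbrepnn : ∀ j : Δ, ∀ i, 0 ≤ b.repr (b j) i := by
      intro j i
      rw [b.repr_self, Finsupp.single_apply]
      split_ifs <;> norm_num
    have hσbj : ∀ j : Δ, ∃ i : Δ, σ (b j) = f i := by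
      intro j
      have hpos' : ∀ i, 0 ≤ b'.repr (σ (b j)) i := (hKey (b j)).1 (hbrepnn j)
      have huniq : ∀ i₁ i₂ : Δ, i₁ ≠ i₂ → b'.repr (σ (b j)) i₁ ≠ 0 →
          b'.repr (σ (b j)) i₂ ≠ 0 → False := by
        intro i₁ i₂ hne hn1 hn2
        set v : E := σ (b j) with hvdef
        set x₁ : E := b'.repr v i₁ • b' i₁ with hx₁def
        have hrepx₁ : ∀ k, b'.repr x₁ k = if i₁ = k then b'.repr v i₁ else 0 := by
          intro k
          rw [hx₁def, map_smul, Finsupp.smul_apply, b'.repr_self, Finsupp.single_apply]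
          split_ifs <;> simp
        set x₂ : E := v - x₁ with hx₂def
        have hrepx₂ : ∀ k, b'.repr x₂ k
            = b'.repr v k - (if i₁ = k then b'.repr v i₁ else 0) := by
          intro k
          rw [hx₂def, map_sub, Finsupp.sub_apply, hrepx₁]
        have hx₁nn : ∀ k, 0 ≤ b'.repr x₁ k := by
          intro k
          rw [hrepx₁]
          split_ifs with h
          · exact hpos' i₁
          · exact le_refl 0
        have hx₂nn : ∀ k, 0 ≤ b'.repr x₂ k := by
          intro k
          rw [hrepx₂]
          split_ifs with h
          · rw [← h]; simp
          · rw [sub_zero]; exact hpos' k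
        have hy₁ : ∀ k, 0 ≤ b.repr (σ⁻¹ x₁) k := by
          apply (hKey (σ⁻¹ x₁)).2
          intro i
          rw [Equiv.Perm.apply_inv_self]
          exact hx₁nn i
        have hy₂ : ∀ k, 0 ≤ b.repr (σ⁻¹ x₂) k := by
          apply (hKey (σ⁻¹ x₂)).2
          intro i
          rw [Equiv.Perm.apply_inv_self]
          exact hx₂nn i
        have hσinvg : Good Φ σ⁻¹ := good_inv Φ hσg
        have hsplit : σ⁻¹ x₁ + σ⁻¹ x₂ = b j := by
          rw [← hσinvg.1]
          have h1 : x₁ + x₂ = v := by rw [hx₂def]; abel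
          rw [h1, hvdef]
          exact Equiv.Perm.inv_apply_self σ (b j)
        have hoff : ∀ k, k ≠ j → b.repr (σ⁻¹ x₁) k = 0 := by
          intro k hk
          have h1 : b.repr (σ⁻¹ x₁) k + b.repr (σ⁻¹ x₂) k = 0 := by
            have h2 : b.repr (σ⁻¹ x₁ + σ⁻¹ x₂) k = 0 := by
              rw [hsplit, b.repr_self, Finsupp.single_apply,
                if_neg (fun h => hk h.symm)]
            rw [map_add, Finsupp.add_apply] at h2
            exact h2
          linarith [hy₁ k, hy₂ k]
        have hone : σ⁻¹ x₁ = b.repr (σ⁻¹ x₁) j • b j := by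
          conv_lhs => rw [← b.sum_repr (σ⁻¹ x₁)]
          rw [Finset.sum_eq_single j]
          · intro k _ hk
            rw [hoff k hk, zero_smul]
          · intro h
            exact absurd (Finset.mem_univ j) h
        have hx₁v : x₁ = b.repr (σ⁻¹ x₁) j • v := by
          calc x₁ = σ (σ⁻¹ x₁) := (Equiv.Perm.apply_inv_self σ x₁).symm
          _ = σ (b.repr (σ⁻¹ x₁) j • b j) := congrArg σ hone
          _ = b.repr (σ⁻¹ x₁) j • σ (b j) := hσsmul _ _
          _ = b.repr (σ⁻¹ x₁) j • v := by rw [hvdef]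
        have h2 : b'.repr x₁ i₂ = b.repr (σ⁻¹ x₁) j * b'.repr v i₂ := by
          conv_lhs => rw [hx₁v]
          rw [map_smul, Finsupp.smul_apply, smul_eq_mul]
        have hs0 : b.repr (σ⁻¹ x₁) j = 0 := by
          rw [hrepx₁ i₂, if_neg hne] at h2
          rcases mul_eq_zero.1 h2.symm with h | h
          · exact h
          · exact absurd h hn2
        apply hn1
        have h4 := hrepx₁ i₁
        rw [if_pos rfl] at h4
        rw [hx₁v, hs0, zero_smul] at h4
        rw [map_zero] at h4
        simpa using h4.symm
      have hvne : σ (b j) ≠ 0 := by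
        intro h
        have h1 : σ (b j) = σ 0 := by rw [h, good_zero hσg]
        exact b.ne_zero j (σ.injective h1)
      have hex1 : ∃ i, b'.repr (σ (b j)) i ≠ 0 := by
        by_contra h
        push_neg at h
        apply hvne
        have h1 : b'.repr (σ (b j)) = 0 := Finsupp.ext h
        exact (LinearEquiv.map_eq_zero_iff b'.repr).1 h1
      obtain ⟨i, hi⟩ := hex1
      have hvsum : σ (b j) = b'.repr (σ (b j)) i • b' i := by
        conv_lhs => rw [← b'.sum_repr (σ (b j))]
        rw [Finset.sum_eq_single i]
        · intro k _ hk
          have hzk : b'.repr (σ (b j)) k = 0 := by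
            by_contra h
            exact huniq k i hk h hi
          rw [hzk, zero_smul]
        · intro h
          exact absurd (Finset.mem_univ i) h
      have hμpos : 0 < b'.repr (σ (b j)) i := lt_of_le_of_ne (hpos' i) (Ne.symm hi)
      have hσbjΦ : σ (b j) ∈ Φ := by
        rw [hb j]
        exact hσg.2.2.2.1 _ (hΔ j.2)
      have hred' := hred (f i) (hfΦ i) (b'.repr (σ (b j)) i)
        (by rw [← hb' i, ← hvsum]; exact hσbjΦ)
      rcases hred' with h | h
      · exact ⟨i, by rw [hvsum, hb', h, one_smul]⟩
      · exfalso
        rw [h] at hμpos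
        norm_num at hμpos
    choose π hπ using hσbj
    have hπinj : Function.Injective π := by
      intro j₁ j₂ h
      have h1 : σ (b j₁) = σ (b j₂) := by rw [hπ j₁, hπ j₂, h]
      exact b.injective (σ.injective h1)
    have hπsurj : Function.Surjective π := Finite.injective_iff_surjective.1 hπinj
    obtain ⟨i₁, hi₁⟩ := hπsurj i₀
    set σL : E →ₗ[ℝ] E :=
      { toFun := ⇑σ, map_add' := hσg.1, map_smul' := fun r x => hσg.2.1 r x } with hσLdef
    have hfun : ∀ x : E, b.repr (σ x) i₀ = -(c i₀) * b.repr x i₁ := by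
      have hlin : (b.coord i₀).comp σL = (-(c i₀)) • b.coord i₁ := by
        apply b.ext
        intro j
        simp only [LinearMap.comp_apply, LinearMap.smul_apply, Module.Basis.coord_apply, smul_eq_mul]
        show b.repr (σ (b j)) i₀ = -(c i₀) * b.repr (b j) i₁
        rw [hπ j]
        by_cases hj : j = i₁
        · rw [hj, hi₁, hfi₀, map_neg, Finsupp.neg_apply, b.repr_self,
            Finsupp.single_apply, if_pos rfl, mul_one]
        · have hπj : π j ≠ i₀ := fun h => hj (hπinj (h.trans hi₁.symm))
          rw [hfne (π j) hπj, show ((π j : Δ) : E) = b (π j) from (hb _).symm,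
            b.repr_self, b.repr_self, Finsupp.single_apply, Finsupp.single_apply,
            if_neg hπj, if_neg (fun h : j = i₁ => hj h), mul_zero]

      intro x
      have h1 := congrArg (fun (g : E →ₗ[ℝ] ℝ) => g x) hlin
      simpa [hσLdef] using h1
    intro α hα
    have hσinvα : σ⁻¹ α ∈ Φ := hσg.2.2.2.2 α hα
    obtain ⟨n, hn⟩ := int_coords h0 hrefl hint hred hΔ hdecomp b hb (σ⁻¹ α) hσinvα i₁
    have hrepα : b.repr α i₀ = -(c i₀) * n := by
      have h1 := hfun (σ⁻¹ α)
      rw [Equiv.Perm.apply_inv_self] at h1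
      rw [h1, hn]
    have htα : ⟪t, α⟫ = -(l' : ℝ) * n := by
      rw [inner_basis_sum b hb t α, Finset.sum_eq_single i₀]
      · rw [hrepα]
        linear_combination (-(n : ℝ)) * hti₀l
      · intro j _ hj
        rw [ht_j j hj, mul_zero]
      · intro h
        exact absurd (Finset.mem_univ i₀) h
    have hsm : ∀ (m : ℤ) (y : E), m • y = ((m : ℝ)) • y :=
      fun m y => (Int.cast_smul_eq_zsmul ℝ m y).symm
    by_cases hDl : D ∣ l'
    · rw [hM, if_pos hDl, AddSubgroup.mem_smul_pointwise_iff_exists]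
      refine ⟨(-n) • ((2 / ⟪α, α⟫) • α), ?_, ?_⟩
      · apply AddSubgroup.zsmul_mem
        rw [hcoΛr]
        exact AddSubgroup.subset_closure ⟨α, hα, rfl⟩
      · rw [hsm, hsm, smul_smul, smul_smul, htα]
        congr 1
        push_cast
        ring
    · rw [hM, if_neg hDl, AddSubgroup.mem_smul_pointwise_iff_exists]
      have hαΛr : α ∈ Λr := by
        rw [hΛr]
        exact AddSubgroup.subset_closure (Finset.mem_coe.2 hα)
      rcases hlen α hα with h2 | h2
      · refine ⟨(-n) • α, AddSubgroup.zsmul_mem _ hαΛr _, ?_⟩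
        rw [hsm, hsm, smul_smul, htα, h2]
        congr 1
        push_cast
        ring
      · have hDp : Nat.Prime D := by
          rcases hD with h | h
          · exact absurd (h ▸ one_dvd l') hDl
          · exact h
        obtain ⟨k, hk⟩ := htΛ α hα
        rw [real_inner_smul_right, h2] at hk
        have hD0 : (D:ℝ) ≠ 0 := by
          have := hDp.pos
          exact_mod_cast ne_of_gt this
        have hint2 : -((l':ℝ) * n) = (k:ℝ) * D := by
          rw [htα] at hk
          field_simp at hk
          linarith
        have hint3 : -((l':ℤ) * n) = k * D := by exact_mod_cast hint2
        have hdvd : ((D:ℕ):ℤ) ∣ (l':ℤ) * n := ⟨-k, by linear_combination -hint3⟩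
        have hpZ : Prime ((D:ℕ):ℤ) := Nat.prime_iff_prime_int.1 hDp
        have hdvdn : ((D:ℕ):ℤ) ∣ n := by
          rcases hpZ.dvd_mul.1 hdvd with h | h
          · exact absurd (Int.natCast_dvd_natCast.1 h) hDl
          · exact h
        obtain ⟨n', hn'⟩ := hdvdn
        refine ⟨(-n') • α, AddSubgroup.zsmul_mem _ hαΛr _, ?_⟩
        rw [hsm, hsm, smul_smul, htα, h2, hn']
        congr 1
        push_cast
        field_simp

  · -- slack case : t = 0
    have hlt : ⟪t, θ₀⟫ < l' := lt_of_le_of_ne htle hteq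
    apply hdone0 ?_
    apply orth_all b hb
    intro i
    by_contra hi0
    have hipos : 0 < ⟪t, (i : E)⟫ := lt_of_le_of_ne (htc i) (Ne.symm hi0)
    set w : E := sharp i with hwdef
    have hw0 : w ≠ 0 := by
      intro h
      have h2 := hwj i i
      rw [if_pos rfl, ← hwdef, h] at h2
      simp at h2
    set ε : ℝ := min ⟪t, (i : E)⟫ ((l' - ⟪t, θ₀⟫) / (|c i| + 1)) with hεdef
    have hε : 0 < ε := by
      apply lt_min hipos
      apply div_pos (by linarith) (by positivity)
    have hεc : ε * |c i| ≤ l' - ⟪t, θ₀⟫ := by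
      have h1 : ε ≤ (l' - ⟪t, θ₀⟫) / (|c i| + 1) := min_le_right _ _
      have h2 : 0 ≤ |c i| := abs_nonneg _
      have h3 : (0:ℝ) < |c i| + 1 := by linarith
      rw [le_div_iff₀ h3] at h1
      nlinarith
    have hmemp : ∀ s : ℝ, |s| ≤ 1 → t + (s * ε) • w ∈ Cl' := by
      intro s hs
      rw [hmemCl']
      constructor
      · intro j
        rw [inner_add_left, real_inner_smul_left, hwj i j]
        rcases eq_or_ne j i with h | h
        · rw [if_pos h, mul_one]
          have h1 : ε ≤ ⟪t, (i : E)⟫ := min_le_left _ _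
          have h2 : |s * ε| ≤ ε := by
            rw [abs_mul, abs_of_pos hε]
            nlinarith
          have h3 : -ε ≤ s * ε := (abs_le.1 h2).1
          rw [h]
          linarith
        · rw [if_neg h, mul_zero, add_zero]
          exact htc j
      · rw [inner_add_left, real_inner_smul_left, hwθ i]
        have h2 : s * ε * c i ≤ ε * |c i| := by
          calc s * ε * c i ≤ |s * ε * c i| := le_abs_self _
          _ = |s| * (ε * |c i|) := by rw [abs_mul, abs_mul, abs_of_pos hε]; ring
          _ ≤ 1 * (ε * |c i|) := by
              apply mul_le_mul_of_nonneg_right hs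
              positivity
          _ = ε * |c i| := one_mul _
        linarith
    have h1 := hmemp 1 (by norm_num)
    have h2 := hmemp (-1) (by norm_num)
    rw [one_mul] at h1
    have h2' : t - ε • w ∈ Cl' := by
      rw [show t - ε • w = t + (-1 * ε) • w by rw [neg_one_mul, neg_smul]; abel]
      exact h2
    exact hpert w hw0 ε hε h1 h2'

end AlcoveAux


open AlcoveAux

/-- let `ι` be an isometry of the principal alcove `C_l` mapping
weights to weights, of the form `ι(x) = σ(x+ρ) - ρ + t` with `σ ∈ W` and `t` a
weight.  Then conjugation by `ι` preserves the affine Weyl group: for every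
`σ' ∈ W_l` (acting by the translated action), `ι⁻¹ σ' ι ∈ W_l`. -/
theorem alcove_isometry_normalizes_affine_weyl
    {E : Type*} [NormedAddCommGroup E] [InnerProductSpace ℝ E]
    (Φ Δ Pos : Finset E)
    (h0 : (0 : E) ∉ Φ)
    (hrefl : ∀ α ∈ Φ, ∀ β ∈ Φ, rootReflection α β ∈ Φ)
    (hint : ∀ α ∈ Φ, ∀ β ∈ Φ, ∃ n : ℤ, 2 * ⟪β, α⟫ / ⟪α, α⟫ = (n : ℝ))
    (hred : ∀ α ∈ Φ, ∀ c : ℝ, c • α ∈ Φ → c = 1 ∨ c = -1)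
    (hirr : ¬ ∃ Φ₁ Φ₂ : Set E, Φ₁.Nonempty ∧ Φ₂.Nonempty ∧ Φ₁ ∪ Φ₂ = ↑Φ ∧
      Disjoint Φ₁ Φ₂ ∧ ∀ α ∈ Φ₁, ∀ β ∈ Φ₂, ⟪α, β⟫ = 0)
    (hΔ : ↑Δ ⊆ (Φ : Set E))
    (hbasis : LinearIndependent ℝ (fun a : Δ => (a : E)))
    (hspan : Submodule.span ℝ (↑Δ : Set E) = ⊤)
    (hdecomp : ∀ β ∈ Φ, ∃ c : Δ → ℝ, (β = ∑ a, c a • (a : E)) ∧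
      ((∀ a, 0 ≤ c a) ∨ (∀ a, c a ≤ 0)))
    (hPos : ∀ β : E, β ∈ Pos ↔ β ∈ Φ ∧
      ∃ c : Δ → ℝ, (∀ a, 0 ≤ c a) ∧ β = ∑ a, c a • (a : E))
    (ρ : E) (hρ : ρ = (2⁻¹ : ℝ) • ∑ β ∈ Pos, β)
    (D : ℕ) (hD : D = 1 ∨ Nat.Prime D)
    (hlen : ∀ β ∈ Φ, ⟪β, β⟫ = 2 ∨ ⟪β, β⟫ = 2 * D)
    (θ φ : E) (hθ : θ ∈ Φ) (hφ : φ ∈ Φ)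
    (hθlong : ⟪θ, θ⟫ = 2 * D) (hφshort : ⟪φ, φ⟫ = 2)
    (l' : ℕ) (hl' : 0 < l')
    (Λr coΛr M : AddSubgroup E)
    (hΛr : Λr = AddSubgroup.closure (↑Φ : Set E))
    (hcoΛr : coΛr = AddSubgroup.closure {x : E | ∃ β ∈ Φ, x = (2 / ⟪β, β⟫) • β})
    (hM : M = if D ∣ l' then (l' : ℤ) • coΛr else (l' : ℤ) • Λr)
    (W Wl : Subgroup (Equiv.Perm E))
    (hW : W = Subgroup.closure
      {g : Equiv.Perm E | ∃ α ∈ Φ, ∀ x, g x = rootReflection α x})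
    (hWl : Wl = Subgroup.closure
      ({g : Equiv.Perm E | ∃ α ∈ Φ, ∀ x, g x = rootReflection α x}
        ∪ {g : Equiv.Perm E | ∃ m ∈ M, ∀ x, g x = x + m}))
    (θ₀ : E) (hθ₀ : θ₀ = if D ∣ l' then θ else φ)
    (Cl : Set E)
    (hCl : Cl = {x : E | (∀ α ∈ Δ, 0 ≤ ⟪x + ρ, α⟫) ∧ ⟪x + ρ, θ₀⟫ ≤ l'})
    (Λ : Set E)
    (hΛ : Λ = {x : E | ∀ β ∈ Φ, ∃ k : ℤ, ⟪x, (2 / ⟪β, β⟫) • β⟫ = (k : ℝ)})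
    (ι : E → E) (σ : Equiv.Perm E) (hσ : σ ∈ W) (t : E) (htΛ : t ∈ Λ)
    (hι : ∀ x : E, ι x = σ (x + ρ) - ρ + t)
    (hιCl : Set.BijOn ι Cl Cl)
    (hιΛ : ∀ x ∈ Λ, ι x ∈ Λ) :
    ∀ g ∈ Wl, ∃ g' ∈ Wl, ∀ x : E, ι (g' (x + ρ) - ρ) = g (ι x + ρ) - ρ := by
  classical
  -- basis from Δ
  have hspan' : ⊤ ≤ Submodule.span ℝ (Set.range (fun a : Δ => (a : E))) := by
    have h1 : Set.range (fun a : Δ => (a : E)) = (↑Δ : Set E) := by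
      ext x
      constructor
      · rintro ⟨a, rfl⟩
        exact a.2
      · intro h
        exact ⟨⟨x, h⟩, rfl⟩
    rw [h1, hspan]
  set b : Module.Basis Δ ℝ E := Module.Basis.mk hbasis hspan' with hbdef
  have hb : ∀ i : Δ, b i = (i : E) := fun i => Module.Basis.mk_apply hbasis hspan' i
  -- properties of σ
  rw [hW] at hσ
  have hσg : Good Φ σ := good_of_mem_W h0 hrefl hσ
  have hσinvg : Good Φ σ⁻¹ := good_inv Φ hσg
  -- θ₀ is a root
  have hθ₀Φ : θ₀ ∈ Φ := by
    rw [hθ₀]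
    split_ifs
    · exact hθ
    · exact hφ
  -- t is a weight
  rw [hΛ] at htΛ
  have htΛ' : ∀ β ∈ Φ, ∃ k : ℤ, ⟪t, (2 / ⟪β, β⟫) • β⟫ = (k : ℝ) := htΛ
  -- the shifted alcove
  set Cl' : Set E := {y : E | (∀ a ∈ Δ, 0 ≤ ⟪y, a⟫) ∧ ⟪y, θ₀⟫ ≤ l'} with hCl'def
  have hClmem : ∀ x : E, x ∈ Cl ↔ x + ρ ∈ Cl' := by
    intro x
    rw [hCl]
    exact Iff.rfl
  have hιform : ∀ x : E, ι x + ρ = σ (x + ρ) + t := by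
    intro x
    rw [hι]
    abel
  have hA : Set.BijOn (fun y => σ y + t) Cl' Cl' := by
    refine ⟨?_, ?_, ?_⟩
    · intro y hy
      have hx : (y - ρ) ∈ Cl := by
        rw [hClmem, sub_add_cancel]
        exact hy
      have h1 := hιCl.mapsTo hx
      rw [hClmem] at h1
      have h2 : ι (y - ρ) + ρ = σ y + t := by
        rw [hιform, sub_add_cancel]
      rw [h2] at h1
      exact h1
    · intro y1 _ y2 _ h
      exact σ.injective (add_right_cancel h)
    · intro y' hy'
      have hx' : (y' - ρ) ∈ Cl := by
        rw [hClmem, sub_add_cancel]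
        exact hy'
      obtain ⟨x, hx, hxeq⟩ := hιCl.surjOn hx'
      refine ⟨x + ρ, ?_, ?_⟩
      · rw [← hClmem]
        exact hx
      · show σ (x + ρ) + t = y'
        rw [← hιform, hxeq, sub_add_cancel]
  -- the key divisibility lemma
  have hMC : ∀ α ∈ Φ, (2 * ⟪t, α⟫ / ⟪α, α⟫) • α ∈ M :=
    lemma_C h0 hrefl hint hred hΔ hdecomp b hb D hD hlen l' hl' Λr coΛr M hΛr hcoΛr hM
      θ₀ hθ₀Φ σ hσg t htΛ' hA
  -- conclusion via closure induction
  intro g hg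
  rw [hWl] at hg
  have hQ : ∃ g' ∈ Wl, ∀ y : E, σ (g' y) + t = g (σ y + t) := by
    refine Subgroup.closure_induction
      (p := fun g _ => ∃ g' ∈ Wl, ∀ y : E, σ (g' y) + t = g (σ y + t)) ?_ ?_ ?_ ?_ hg
    · rintro g (⟨α, hα, hgr⟩ | ⟨m, hm, hgt⟩)
      · -- reflection generator
        have hαΦ : α ∈ Φ := hα
        set β : E := σ⁻¹ α with hβdef
        have hβΦ : β ∈ Φ := hσg.2.2.2.2 α hαΦ
        set u : E := (2 * ⟪t, α⟫ / ⟪α, α⟫) • α with hudef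
        have huM : u ∈ M := hMC α hαΦ
        set v : E := σ⁻¹ (-u) with hvdef
        have hvM : v ∈ M := good_maps_M hΛr hcoΛr hM hσinvg _ (M.neg_mem huM)
        set g' : Equiv.Perm E := (Equiv.addRight v) * (rrPerm β) with hg'def
        refine ⟨g', ?_, ?_⟩
        · rw [hWl]
          apply Subgroup.mul_mem
          · apply Subgroup.subset_closure
            right
            exact ⟨v, hvM, fun x => rfl⟩
          · apply Subgroup.subset_closure
            left
            exact ⟨β, hβΦ, fun x => rfl⟩
        · intro y
          have hg'y : g' y = rootReflection β y + v := rfl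
          have hσβ : σ β = α := Equiv.Perm.apply_inv_self σ α
          have hσsub : ∀ x z : E, σ (x - z) = σ x - σ z := by
            intro x z
            have h5 := hσg.1 (x - z) z
            rw [sub_add_cancel] at h5
            rw [h5]
            abel
          have hcomm : σ (rootReflection β y) = rootReflection α (σ y) := by
            have h1 : ⟪y, β⟫ = ⟪σ y, α⟫ := by
              conv_lhs => rw [← hσg.2.2.1 y β]
              rw [hσβ]
            have h2 : ⟪β, β⟫ = ⟪α, α⟫ := by
              conv_lhs => rw [← hσg.2.2.1 β β]
              rw [hσβ]
            simp only [rootReflection]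
            rw [hσsub, hσg.2.1, hσβ, h1, h2]
          have hσv : σ v = rootReflection α t - t := by
            rw [hvdef, Equiv.Perm.apply_inv_self]
            simp only [rootReflection, hudef]
            abel
          calc σ (g' y) + t = σ (rootReflection β y + v) + t := by rw [hg'y]
          _ = σ (rootReflection β y) + σ v + t := by rw [hσg.1]
          _ = rootReflection α (σ y) + (rootReflection α t - t) + t := by
              rw [hcomm, hσv]
          _ = rootReflection α (σ y) + rootReflection α t := by abel
          _ = rootReflection α (σ y + t) := (rr_add α (σ y) t).symm
          _ = g (σ y + t) := (hgr (σ y + t)).symm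
      · -- translation generator
        set g' : Equiv.Perm E := Equiv.addRight (σ⁻¹ m) with hg'def
        have hmM : σ⁻¹ m ∈ M := good_maps_M hΛr hcoΛr hM hσinvg _ hm
        refine ⟨g', ?_, ?_⟩
        · rw [hWl]
          apply Subgroup.subset_closure
          right
          exact ⟨σ⁻¹ m, hmM, fun x => rfl⟩
        · intro y
          have hg'y : g' y = y + σ⁻¹ m := rfl
          rw [hg'y, hσg.1, Equiv.Perm.apply_inv_self, hgt]
          abel
    · exact ⟨1, Wl.one_mem, fun y => rfl⟩
    · rintro g₁ g₂ _ _ ⟨g₁', h1, e1⟩ ⟨g₂', h2, e2⟩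
      refine ⟨g₁' * g₂', Wl.mul_mem h1 h2, fun y => ?_⟩
      rw [Equiv.Perm.mul_apply, Equiv.Perm.mul_apply, e1 (g₂' y), e2 y]
    · rintro g _ ⟨g', h, e⟩
      refine ⟨g'⁻¹, Wl.inv_mem h, fun y => ?_⟩
      apply g.injective
      rw [Equiv.Perm.apply_inv_self]
      have h1 := e (g'⁻¹ y)
      rw [Equiv.Perm.apply_inv_self] at h1
      exact h1.symm
  obtain ⟨g', hg', heq⟩ := hQ
  refine ⟨g', hg', fun x => ?_⟩
  have h1 : ι (g' (x + ρ) - ρ) = σ (g' (x + ρ)) - ρ + t := by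
    rw [hι, sub_add_cancel]
  rw [h1]
  have h2 := heq (x + ρ)
  have h3 : ι x + ρ = σ (x + ρ) + t := hιform x
  rw [h3]
  have h4 : σ (g' (x + ρ)) - ρ + t = (σ (g' (x + ρ)) + t) - ρ := by abel
  rw [h4, h2]
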